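/- Let $V$ be a DG-vector space over a field $\mathbb{K}$ of characteristic 0, $F\subseteq V$ a DG-subspace, $A$ a local Artin $\mathbb{K}$-algebra with maximal ideal $\mathfrak{m}_A$, and $\xi\in\operatorname{End}^0(V)\otimes\mathfrak{m}_A$. Then $e^\xi(F\otimes A)=F\otimes A$ if and only if $\xi\in\operatorname{End}^0(V;F)\otimes\mathfrak{m}_A$, where $\operatorname{End}^0(V;F)$ denotes degree 0 endomorphisms preserving $F$. -/

import Mathlib

open IsLocalRing TensorProduct

variable {K A V : Type*}

/-- The exponential `e^ξ = ∑ ξⁿ/n!` of an `A`-linear endomorphism, as a finitely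
supported sum (all but finitely many terms vanish when `ξ` is nilpotent). -/
noncomputable def expEnd (K : Type*) {A M : Type*} [Field K] [CommRing A] [Algebra K A]
    [AddCommGroup M] [Module A M] (ξ : Module.End A M) : Module.End A M :=
  ∑ᶠ n : ℕ, algebraMap K A ((Nat.factorial n : K))⁻¹ • ξ ^ n

/-- If `φ` maps `Q` into `Q'`, then `φ` maps `J • Q` into `J • Q'`. -/
private lemma aux_smul_map {R M : Type*} [CommRing R] [AddCommGroup M] [Module R M]
    (J : Ideal R) (φ : M →ₗ[R] M) {Q Q' : Submodule R M} (h : ∀ x ∈ Q, φ x ∈ Q') :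
    ∀ x ∈ J • Q, φ x ∈ J • Q' := by
  intro x hx
  refine Submodule.smul_induction_on hx (fun a ha m hm => ?_) (fun y z hy hz => ?_)
  · rw [map_smul]; exact Submodule.smul_mem_smul ha (h m hm)
  · rw [map_add]; exact Submodule.add_mem _ hy hz

set_option maxHeartbeats 1000000 in
/-- For a DG-vector space `V` over a field `K` of characteristic `0`, a DG-subspace
`F ⊆ V`, a local Artin `K`-algebra `A` and `ξ ∈ End⁰(V) ⊗ 𝔪_A` (modelled as an
`A`-linear endomorphism of `A ⊗ V` lying in `𝔪_A • End`), one has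
`e^ξ(F ⊗ A) = F ⊗ A` iff `ξ ∈ End⁰(V; F) ⊗ 𝔪_A`, i.e. iff `ξ` preserves `F ⊗ A`. -/
theorem stmt_13 [Field K] [CharZero K] [CommRing A] [Algebra K A]
    [IsLocalRing A] [IsArtinianRing A]
    [AddCommGroup V] [Module K V] (F : Submodule K V)
    (ξ : Module.End A (A ⊗[K] V))
    (hξ : ξ ∈ (maximalIdeal A) • (⊤ : Submodule A (Module.End A (A ⊗[K] V)))) :
    Submodule.map (expEnd K ξ) (F.baseChange A) = F.baseChange A ↔
      ∀ u ∈ F.baseChange A, ξ u ∈ F.baseChange A := by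
  classical
  set I : Ideal A := maximalIdeal A with hI
  set N : Submodule A (A ⊗[K] V) := F.baseChange A with hN
  set c : ℕ → A := fun n => algebraMap K A ((Nat.factorial n : K))⁻¹ with hc
  -- the maximal ideal is nilpotent
  obtain ⟨k₀, hk₀⟩ : IsNilpotent I := by
    rw [hI, ← IsLocalRing.jacobson_eq_maximalIdeal (⊥ : Ideal A) bot_ne_top]
    exact IsArtinianRing.isNilpotent_jacobson_bot
  set k : ℕ := k₀ + 2 with hkdef
  have hIk : I ^ k = ⊥ := by
    refine le_bot_iff.mp ?_
    calc I ^ k ≤ I ^ k₀ := Ideal.pow_le_pow_right (by omega)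
    _ = ⊥ := hk₀
  -- ξ applied to anything lands in I • ⊤
  have hξ1 : ∀ x : A ⊗[K] V, ξ x ∈ I • (⊤ : Submodule A (A ⊗[K] V)) := by
    refine Submodule.smul_induction_on hξ (fun a ha φ _ => fun x => ?_)
      (fun φ ψ hφ hψ => fun x => ?_)
    · rw [LinearMap.smul_apply]
      exact Submodule.smul_mem_smul ha Submodule.mem_top
    · rw [LinearMap.add_apply]
      exact Submodule.add_mem _ (hφ x) (hψ x)
  have hpowsmul : ∀ (j : ℕ) (Q : Submodule A (A ⊗[K] V)),
      I ^ j • (I • Q) = I ^ (j + 1) • Q := by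
    intro j Q
    rw [pow_succ, ← Ideal.smul_eq_mul, Submodule.smul_assoc]
  have hpowsmul' : ∀ (j : ℕ) (Q : Submodule A (A ⊗[K] V)),
      I • (I ^ j • Q) = I ^ (j + 1) • Q := by
    intro j Q
    rw [pow_succ', ← Ideal.smul_eq_mul, Submodule.smul_assoc]
  have hξstep : ∀ (j : ℕ) (x : A ⊗[K] V), x ∈ I ^ j • (⊤ : Submodule A (A ⊗[K] V)) →
      ξ x ∈ I ^ (j + 1) • (⊤ : Submodule A (A ⊗[K] V)) := by
    intro j x hx
    have h1 := aux_smul_map (I ^ j) (ξ : (A ⊗[K] V) →ₗ[A] (A ⊗[K] V))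
      (Q := ⊤) (Q' := I • ⊤) (fun y _ => hξ1 y) x hx
    rwa [hpowsmul] at h1
  have hξpow : ∀ (n : ℕ) (x : A ⊗[K] V),
      (ξ ^ (n + 1)) x ∈ I ^ (n + 1) • (⊤ : Submodule A (A ⊗[K] V)) := by
    intro n
    induction n with
    | zero => intro x; rw [pow_one, pow_one]; exact hξ1 x
    | succ n ih =>
      intro x
      have : (ξ ^ (n + 2)) x = ξ ((ξ ^ (n + 1)) x) := by
        rw [show n + 2 = (n + 1) + 1 from rfl, pow_succ', Module.End.mul_apply]
      rw [this]
      exact hξstep _ _ (ih x)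
  have hξk : ξ ^ k = 0 := by
    refine LinearMap.ext fun x => ?_
    have h1 := hξpow (k₀ + 1) x
    rw [show k₀ + 1 + 1 = k from rfl, hIk, Submodule.bot_smul, Submodule.mem_bot] at h1
    simpa using h1
  -- the exponential as a finite sum
  have hEdef : expEnd K ξ = ∑ n ∈ Finset.range k, c n • ξ ^ n := by
    unfold expEnd
    refine finsum_eq_sum_of_support_subset _ ?_
    intro n hn
    by_contra hnk
    simp only [Finset.coe_range, Set.mem_Iio, not_lt] at hnk
    have : ξ ^ n = 0 := pow_eq_zero_of_le hnk hξk
    rw [Function.mem_support] at hn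
    exact hn (by rw [this, smul_zero])
  have hE : ∀ u : A ⊗[K] V, expEnd K ξ u = ∑ n ∈ Finset.range k, c n • (ξ ^ n) u := by
    intro u
    rw [hEdef, LinearMap.sum_apply]
    exact Finset.sum_congr rfl fun n _ => by rw [LinearMap.smul_apply]
  have hc0 : c 0 = 1 := by simp [hc]
  have hc1 : c 1 = 1 := by simp [hc]
  have hEsub : ∀ u : A ⊗[K] V,
      expEnd K ξ u - u = ∑ n ∈ Finset.Ico 1 k, c n • (ξ ^ n) u := by
    intro u
    rw [hE u, Finset.range_eq_Ico, Finset.sum_eq_sum_Ico_succ_bot (by omega : 0 < k)]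
    simp [hc0]
  have hIcoTerm : ∀ (u : A ⊗[K] V) (n : ℕ), 1 ≤ n →
      (ξ ^ n) u ∈ I • (⊤ : Submodule A (A ⊗[K] V)) := by
    intro u n hn
    obtain ⟨m, rfl⟩ := Nat.exists_eq_add_of_le hn
    rw [show (1 : ℕ) + m = m + 1 from Nat.add_comm 1 m]
    exact Submodule.smul_mono_left (Ideal.pow_le_self (by omega)) (hξpow m u)
  have hEsubmem : ∀ u : A ⊗[K] V,
      expEnd K ξ u - u ∈ I • (⊤ : Submodule A (A ⊗[K] V)) := by
    intro u
    rw [hEsub u]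
    refine Submodule.sum_mem _ fun n hn => Submodule.smul_mem _ _ ?_
    exact hIcoTerm u n (Finset.mem_Ico.mp hn).1
  -- projection onto F, base-changed
  obtain ⟨C, hC⟩ := Submodule.exists_isCompl F
  set π : V →ₗ[K] V := F.subtype.comp (F.projectionOnto C hC) with hπ
  have hπ1 : ∀ v : V, π v ∈ F := fun v => (F.projectionOnto C hC v).2
  have hπ2 : ∀ v ∈ F, π v = v := by
    intro v hv
    show ((F.projectionOnto C hC) v : V) = v
    conv_lhs => rw [show v = ((⟨v, hv⟩ : F) : V) from rfl,
      Submodule.projectionOnto_apply_left hC]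
  set p : (A ⊗[K] V) →ₗ[A] (A ⊗[K] V) := LinearMap.baseChange A π with hp
  have hp1 : ∀ x : A ⊗[K] V, p x ∈ N := by
    intro x
    induction x using TensorProduct.induction_on with
    | zero => simp
    | tmul a v =>
      rw [hp, LinearMap.baseChange_tmul]
      exact Submodule.tmul_mem_baseChange_of_mem a (hπ1 v)
    | add x y hx hy => rw [map_add]; exact Submodule.add_mem _ hx hy
  have hp2 : ∀ x ∈ N, p x = x := by
    intro x hx
    rw [hN, Submodule.baseChange_eq_span] at hx
    refine Submodule.span_induction ?_ ?_ ?_ ?_ hx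
    · rintro y ⟨v, hv, rfl⟩
      show p ((1 : A) ⊗ₜ[K] v) = _
      rw [hp, LinearMap.baseChange_tmul, hπ2 v hv]
      rfl
    · simp
    · intro y z _ _ hy hz; rw [map_add, hy, hz]
    · intro a y _ hy; rw [map_smul, hy]
  -- intersection lemma: N ∩ (J • ⊤) ⊆ J • N
  have hcap : ∀ (J : Ideal A) (x : A ⊗[K] V), x ∈ N →
      x ∈ J • (⊤ : Submodule A (A ⊗[K] V)) → x ∈ J • N := by
    intro J x hxN hxJ
    rw [← hp2 x hxN]
    exact aux_smul_map J p (fun y _ => hp1 y) x hxJ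
  constructor
  · -- e^ξ(N) = N → ξ preserves N
    intro hmap
    have hEN : ∀ u ∈ N, expEnd K ξ u ∈ N := by
      intro u hu
      have := Submodule.mem_map_of_mem (f := expEnd K ξ) hu
      rwa [hmap] at this
    have main : ∀ j : ℕ, ∀ u ∈ N,
        ξ u ∈ I • N ⊔ (I ^ j • (⊤ : Submodule A (A ⊗[K] V))) := by
      intro j
      induction j with
      | zero =>
        intro u hu
        refine Submodule.mem_sup_right ?_
        rw [pow_zero, Ideal.one_eq_top, Submodule.top_smul]
        trivial
      | succ j ih =>
        intro u hu
        set S : Submodule A (A ⊗[K] V) :=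
          I • N ⊔ (I ^ (j + 1) • (⊤ : Submodule A (A ⊗[K] V))) with hS
        have hle : I • (I • N ⊔ (I ^ j • (⊤ : Submodule A (A ⊗[K] V)))) ≤ S := by
          rw [Submodule.smul_sup, hpowsmul' j ⊤]
          exact sup_le_sup_right (smul_mono_right I Submodule.smul_le_right) _
        have hsmul1 : ∀ y ∈ I • N, ξ y ∈ S := by
          intro y hy
          exact hle (aux_smul_map I (ξ : (A ⊗[K] V) →ₗ[A] (A ⊗[K] V)) ih y hy)
        have hSstable : ∀ y ∈ S, ξ y ∈ S := by
          intro y hy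
          obtain ⟨y₁, hy₁, y₂, hy₂, rfl⟩ := Submodule.mem_sup.mp hy
          rw [map_add]
          refine Submodule.add_mem _ (hsmul1 y₁ hy₁) (Submodule.mem_sup_right ?_)
          exact Submodule.smul_mono_left (Ideal.pow_le_pow_right (by omega))
            (hξstep _ _ hy₂)
        have hSpow : ∀ (m : ℕ) (y : A ⊗[K] V), y ∈ S → (ξ ^ m) y ∈ S := by
          intro m
          induction m with
          | zero => intro y hy; rwa [pow_zero, Module.End.one_apply]
          | succ m ihm =>
            intro y hy
            rw [pow_succ', Module.End.mul_apply]
            exact hSstable _ (ihm y hy)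
        have hmapSj : ∀ y ∈ I • N ⊔ (I ^ j • (⊤ : Submodule A (A ⊗[K] V))), ξ y ∈ S := by
          intro y hy
          obtain ⟨y₁, hy₁, y₂, hy₂, rfl⟩ := Submodule.mem_sup.mp hy
          rw [map_add]
          exact Submodule.add_mem _ (hsmul1 y₁ hy₁)
            (Submodule.mem_sup_right (hξstep _ _ hy₂))
        have h1 : expEnd K ξ u - u ∈ I • N :=
          hcap I _ (sub_mem (hEN u hu) hu) (hEsubmem u)
        have hsum : ∑ n ∈ Finset.Ico 2 k, c n • (ξ ^ n) u ∈ S := by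
          refine Submodule.sum_mem _ fun n hn => Submodule.smul_mem _ _ ?_
          obtain ⟨hn2, _⟩ := Finset.mem_Ico.mp hn
          obtain ⟨m, rfl⟩ := Nat.exists_eq_add_of_le hn2
          have heq : (ξ ^ (2 + m)) u = (ξ ^ m) (ξ (ξ u)) := by
            rw [show 2 + m = m + 2 from Nat.add_comm 2 m, pow_add,
              Module.End.mul_apply]
            congr 1
          rw [heq]
          exact hSpow m _ (hmapSj _ (ih u hu))
        have hξu : ξ u = (expEnd K ξ u - u) - ∑ n ∈ Finset.Ico 2 k, c n • (ξ ^ n) u := by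
          rw [hEsub u, Finset.sum_eq_sum_Ico_succ_bot (by omega : 1 < k)]
          simp [hc1]
        rw [hξu]
        exact sub_mem (Submodule.mem_sup_left h1) hsum
    intro u hu
    have h1 := main k u hu
    rw [hIk, Submodule.bot_smul, sup_bot_eq] at h1
    exact Submodule.smul_le_right h1
  · -- ξ preserves N → e^ξ(N) = N
    intro h
    have hpow : ∀ (n : ℕ), ∀ u ∈ N, (ξ ^ n) u ∈ N := by
      intro n
      induction n with
      | zero => intro u hu; rwa [pow_zero, Module.End.one_apply]
      | succ n ihn =>
        intro u hu
        rw [pow_succ', Module.End.mul_apply]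
        exact h _ (ihn u hu)
    have hEN : ∀ u ∈ N, expEnd K ξ u ∈ N := by
      intro u hu
      rw [hE u]
      exact Submodule.sum_mem _ fun n _ => Submodule.smul_mem _ _ (hpow n u hu)
    set η : Module.End A (A ⊗[K] V) := expEnd K ξ - 1 with hη
    have hηapp : ∀ u : A ⊗[K] V, η u = expEnd K ξ u - u := by
      intro u; rw [hη, LinearMap.sub_apply, Module.End.one_apply]
    have hηN : ∀ u ∈ N, η u ∈ I • N := by
      intro u hu
      rw [hηapp]
      exact hcap I _ (sub_mem (hEN u hu) hu) (hEsubmem u)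
    have hηN' : ∀ u ∈ N, η u ∈ N := fun u hu => Submodule.smul_le_right (hηN u hu)
    have hηpowN : ∀ (n : ℕ), ∀ u ∈ N, (η ^ n) u ∈ N := by
      intro n
      induction n with
      | zero => intro u hu; rwa [pow_zero, Module.End.one_apply]
      | succ n ihn =>
        intro u hu
        rw [pow_succ', Module.End.mul_apply]
        exact hηN' _ (ihn u hu)
    have hηpow : ∀ (n : ℕ), ∀ u ∈ N, (η ^ n) u ∈ I ^ n • N := by
      intro n
      induction n with
      | zero =>
        intro u hu
        simpa using hu
      | succ n ihn =>
        intro u hu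
        rw [pow_succ' η n, Module.End.mul_apply]
        have h1 := aux_smul_map (I ^ n) (η : (A ⊗[K] V) →ₗ[A] (A ⊗[K] V))
          (Q := N) (Q' := I • N) hηN _ (ihn u hu)
        rwa [hpowsmul] at h1
    have hηk : ∀ u ∈ N, (η ^ k) u = 0 := by
      intro u hu
      have h1 := hηpow k u hu
      rwa [hIk, Submodule.bot_smul, Submodule.mem_bot] at h1
    refine le_antisymm ?_ ?_
    · rintro x ⟨u, hu, rfl⟩
      exact hEN u hu
    · intro u hu
      set f : ℕ → A ⊗[K] V := fun i => (-1 : A) ^ i • (η ^ i) u with hf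
      set v : A ⊗[K] V := ∑ i ∈ Finset.range k, f i with hv
      have hvN : v ∈ N := by
        refine Submodule.sum_mem _ fun i _ => Submodule.smul_mem _ _ (hηpowN i u hu)
      refine ⟨v, hvN, ?_⟩
      have hstep : ∀ i : ℕ, f i + η (f i) = f i - f (i + 1) := by
        intro i
        have h1 : η (f i) = (-1 : A) ^ i • (η ^ (i + 1)) u := by
          simp only [hf]
          rw [map_smul, pow_succ', Module.End.mul_apply]
        have h2 : f (i + 1) = -((-1 : A) ^ i • (η ^ (i + 1)) u) := by
          simp only [hf]
          rw [pow_succ]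
          simp [neg_smul, mul_comm]
          exact neg_smul ((-1 : A) ^ i) ((η ^ (i + 1)) u)
        rw [h1, h2]
        abel
      have hEv : expEnd K ξ v = v + η v := by
        rw [hηapp]; abel
      have hsum2 : v + η v = u := by
        rw [hv, map_sum, ← Finset.sum_add_distrib,
          Finset.sum_congr rfl fun i _ => hstep i, Finset.sum_range_sub' f k]
        have hf0 : f 0 = u := by simp [hf]
        have hfk : f k = 0 := by simp only [hf]; rw [hηk u hu, smul_zero]
        rw [hf0, hfk, sub_zero]
      rw [hEv, hsum2]
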